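/- Let m ≥ 2, let d ∈ V, set ε = +1 if ϑ_0(d) = 0 and ε = −1 if ϑ_0(d) = 1, and let X = {x ∈ V : ϑ_d(x) = 1}. Then for all distinct a, b ∈ X, the number of elements x ∈ X with x ≠ a, x ≠ b and ⟨a,b⟩ + ⟨a,x⟩ + ⟨b,x⟩ = 0 equals 2^{2m−2} − ε·2^{m−1} − 2. (That is, the two-graph 𝒳^ε_{2m} on X whose triples are those satisfying ⟨a,b⟩+⟨a,c⟩+⟨b,c⟩ = 0 is a regular two-graph of degree 2^{2m−2} − ε·2^{m−1} − 2.) -/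

import Mathlib

open Finset

/-- The symplectic bilinear form `⟨u,v⟩ = ∑_{i<m} (u_i v_{m+i} + u_{m+i} v_i)` on `(F_2)^{2m}`. -/
def symp (m : ℕ) (u v : Fin (2*m) → ZMod 2) : ZMod 2 :=
  ∑ i : Fin m, (u ⟨i.1, by omega⟩ * v ⟨m + i.1, by omega⟩ +
    u ⟨m + i.1, by omega⟩ * v ⟨i.1, by omega⟩)

/-- The quadratic form `ϑ_0(u) = ∑_{i<m} u_i u_{m+i}`. -/
def th0 (m : ℕ) (u : Fin (2*m) → ZMod 2) : ZMod 2 :=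
  ∑ i : Fin m, u ⟨i.1, by omega⟩ * u ⟨m + i.1, by omega⟩

/-- The quadratic form `ϑ_a(u) = ϑ_0(u) + ⟨a,u⟩`. -/
def th (m : ℕ) (a u : Fin (2*m) → ZMod 2) : ZMod 2 :=
  th0 m u + symp m a u


variable {m : ℕ}

lemma symp_comm (u v : Fin (2*m) → ZMod 2) : symp m u v = symp m v u := by
  unfold symp; apply Finset.sum_congr rfl; intros; ring

lemma symp_add_left (u v w : Fin (2*m) → ZMod 2) :
    symp m (u + v) w = symp m u w + symp m v w := by
  unfold symp
  rw [← Finset.sum_add_distrib]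
  apply Finset.sum_congr rfl; intros; simp only [Pi.add_apply]; ring

lemma symp_add_right (u v w : Fin (2*m) → ZMod 2) :
    symp m u (v + w) = symp m u v + symp m u w := by
  rw [symp_comm, symp_add_left, symp_comm v, symp_comm w]

lemma symp_self (u : Fin (2*m) → ZMod 2) : symp m u u = 0 := by
  unfold symp
  apply Finset.sum_eq_zero; intro i _
  rw [mul_comm]; exact CharTwo.add_self_eq_zero _

lemma th0_add (u v : Fin (2*m) → ZMod 2) :
    th0 m (u + v) = th0 m u + th0 m v + symp m u v := by
  unfold th0 symp
  rw [← Finset.sum_add_distrib, ← Finset.sum_add_distrib]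
  apply Finset.sum_congr rfl; intros; simp only [Pi.add_apply]; ring
lemma zmod2_split {α : Type*} [DecidableEq α] (s : Finset α) (g : α → ZMod 2) :
    (s.filter fun x => g x = 0).card + (s.filter fun x => g x = 1).card = s.card := by
  have h := Finset.card_filter_add_card_filter_not (s := s) (p := fun x => g x = 0)
  rw [← h]
  congr 1
  apply congrArg
  apply Finset.filter_congr
  intro x _
  generalize g x = a
  revert a; decide

lemma card_filter_equiv {α β : Type*} [Fintype α] [Fintype β] [DecidableEq α] [DecidableEq β]
    (e : α ≃ β) (P : β → Prop) [DecidablePred P] :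
    (univ.filter fun a => P (e a)).card = (univ.filter P).card := by
  apply Finset.card_bij (fun a _ => e a)
  · intro a ha; simp only [mem_filter, mem_univ, true_and] at ha ⊢; exact ha
  · intro a _ a' _ h; exact e.injective h
  · intro b hb
    simp only [mem_filter, mem_univ, true_and] at hb ⊢
    exact ⟨e.symm b, by simpa using hb, by simp⟩

lemma half_card {α : Type*} [Fintype α] [DecidableEq α] (f : α → ZMod 2) (T : α ≃ α)
    (hT : ∀ x, f (T x) = f x + 1) :
    2 * (univ.filter fun x => f x = 0).card = Fintype.card α := by
  have h1 : (univ.filter fun x => f x = 1).card = (univ.filter fun x => f x = 0).card := by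
    apply Finset.card_bij (fun a _ => T.symm a)
    · intro x hx
      simp only [mem_filter, mem_univ, true_and] at hx ⊢
      have h := hT (T.symm x)
      rw [T.apply_symm_apply] at h
      rw [hx] at h
      generalize f (T.symm x) = a at h ⊢
      revert h; revert a; decide
    · intro a _ a' _ h; exact T.symm.injective h
    · intro y hy
      simp only [mem_filter, mem_univ, true_and] at hy ⊢
      refine ⟨T y, by rw [hT y, hy]; rfl, by simp⟩
  have h2 := zmod2_split (univ : Finset α) f
  rw [← Finset.card_univ]
  omega

def glue (m : ℕ) : ((Fin m → ZMod 2) × (Fin m → ZMod 2)) ≃ (Fin (2*m) → ZMod 2) where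
  toFun p := fun j => if h : j.1 < m then p.1 ⟨j.1, h⟩ else p.2 ⟨j.1 - m, by omega⟩
  invFun x := (fun i => x ⟨i.1, by omega⟩, fun i => x ⟨m + i.1, by omega⟩)
  left_inv p := by
    refine Prod.ext ?_ ?_ <;> funext i
    · simp [i.2]
    · have h : ¬ (m + i.1 < m) := by omega
      simp only [h, dif_neg, not_false_iff]
      congr 1
      exact Fin.ext (by simp)
  right_inv x := by
    funext j
    by_cases h : j.1 < m
    · simp [h]
    · simp only [h, dif_neg, not_false_iff]
      congr 1
      exact Fin.ext (by simp; omega)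

lemma th0_glue (m : ℕ) (p : (Fin m → ZMod 2) × (Fin m → ZMod 2)) :
    th0 m (glue m p) = ∑ i : Fin m, p.1 i * p.2 i := by
  unfold th0 glue
  apply Finset.sum_congr rfl
  intro i _
  simp only [Equiv.coe_fn_mk]
  have h1 : (i : ℕ) < m := i.2
  have h2 : ¬ (m + (i : ℕ) < m) := by omega
  rw [dif_pos h1, dif_neg h2]
  congr 1
  congr 1
  exact Fin.ext (by simp)

lemma zmod2_ne_zero (a : ZMod 2) (h : a ≠ 0) : a = 1 := by revert h; revert a; decide
lemma inner_card {m : ℕ} (hm : 1 ≤ m) (u : Fin m → ZMod 2) :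
    (univ.filter fun v : Fin m → ZMod 2 => ∑ i, u i * v i = 0).card
      = if u = 0 then 2^m else 2^(m-1) := by
  by_cases hu : u = 0
  · simp only [hu, if_pos]
    have : ∀ v : Fin m → ZMod 2, ∑ i, (0 : Fin m → ZMod 2) i * v i = 0 := by
      intro v; simp
    rw [Finset.filter_true_of_mem (fun v _ => this v), Finset.card_univ]
    simp [hu]
  · simp only [hu, if_neg, if_false]
    obtain ⟨i, hi⟩ := Function.ne_iff.mp hu
    have hi1 : u i = 1 := zmod2_ne_zero _ (by simpa using hi)
    have hT : ∀ v : Fin m → ZMod 2,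
        (∑ j, u j * (Equiv.addRight (Pi.single i 1) v) j) = (∑ j, u j * v j) + 1 := by
      intro v
      simp only [Equiv.coe_addRight, Pi.add_apply, mul_add, Finset.sum_add_distrib]
      congr 1
      rw [Finset.sum_eq_single i]
      · simp [hi1]
      · intro j _ hj; simp [Pi.single_apply, hj]
      · intro h; exact absurd (Finset.mem_univ i) h
    have key := half_card (fun v : Fin m → ZMod 2 => ∑ j, u j * v j)
      (Equiv.addRight (Pi.single i 1)) hT
    have hcard : Fintype.card (Fin m → ZMod 2) = 2^m := by simp
    rw [hcard] at key
    have h2 : (2:ℕ)^m = 2 * 2^(m-1) := by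
      rw [← pow_succ', Nat.sub_add_cancel hm]
    rw [h2] at key
    exact Nat.eq_of_mul_eq_mul_left (by norm_num) key
lemma card_th0_zero {m : ℕ} (hm : 1 ≤ m) :
    (univ.filter fun y : Fin (2*m) → ZMod 2 => th0 m y = 0).card
      = 2^(2*m-1) + 2^(m-1) := by
  rw [← card_filter_equiv (glue m) (fun y => th0 m y = 0)]
  have hpred : (univ.filter fun p : (Fin m → ZMod 2) × (Fin m → ZMod 2) => th0 m (glue m p) = 0)
      = univ.filter fun p => ∑ i : Fin m, p.1 i * p.2 i = 0 := by
    apply Finset.filter_congr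
    intro p _
    rw [th0_glue]
  rw [hpred]
  have hfib := Finset.card_eq_sum_card_fiberwise
    (s := univ.filter fun p : (Fin m → ZMod 2) × (Fin m → ZMod 2) => ∑ i : Fin m, p.1 i * p.2 i = 0)
    (t := (univ : Finset (Fin m → ZMod 2))) (f := Prod.fst) (fun x _ => mem_univ _)
  rw [hfib]
  have hinner : ∀ u : Fin m → ZMod 2,
      (((univ.filter fun p : (Fin m → ZMod 2) × (Fin m → ZMod 2) => ∑ i : Fin m, p.1 i * p.2 i = 0)).filter
        fun p => p.1 = u).card
      = (univ.filter fun v : Fin m → ZMod 2 => ∑ i, u i * v i = 0).card := by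
    intro u
    rw [Finset.filter_filter]
    apply Finset.card_bij (fun p _ => p.2)
    · intro p hp
      simp only [mem_filter, mem_univ, true_and] at hp ⊢
      rw [← hp.2]; exact hp.1
    · intro p hp p' hp' h
      simp only [mem_filter, mem_univ, true_and] at hp hp'
      exact Prod.ext (hp.2.trans hp'.2.symm) h
    · intro v hv
      simp only [mem_filter, mem_univ, true_and] at hv ⊢
      exact ⟨(u, v), ⟨hv, rfl⟩, rfl⟩
  calc ∑ u : Fin m → ZMod 2, (((univ.filter fun p : (Fin m → ZMod 2) × (Fin m → ZMod 2) => ∑ i : Fin m, p.1 i * p.2 i = 0)).filter fun p => p.1 = u).card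
      = ∑ u : Fin m → ZMod 2, if u = 0 then 2^m else 2^(m-1) := by
        apply Finset.sum_congr rfl
        intro u _
        rw [hinner u, inner_card hm u]
    _ = 2^(2*m-1) + 2^(m-1) := by
        have step : ∀ u : Fin m → ZMod 2, (if u = 0 then 2^m else 2^(m-1))
            = 2^(m-1) + (if u = 0 then 2^(m-1) else 0) := by
          intro u
          by_cases h : u = 0 <;> simp [h]
          rw [show (2:ℕ)^(m-1) + 2^(m-1) = 2 * 2^(m-1) by ring, ← pow_succ', Nat.sub_add_cancel hm]
        simp only [step]
        rw [Finset.sum_add_distrib, Finset.sum_const, Finset.sum_ite_eq' univ (0 : Fin m → ZMod 2)]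
        simp only [mem_univ, if_pos, smul_eq_mul, Finset.card_univ]
        have hcard : Fintype.card (Fin m → ZMod 2) = 2^m := by simp
        rw [hcard]
        have : (2:ℕ)^m * 2^(m-1) = 2^(2*m-1) := by
          rw [← pow_add]
          congr 1
          omega
        rw [this]
lemma exists_symp_one {m : ℕ} (c : Fin (2*m) → ZMod 2) (hc : c ≠ 0) :
    ∃ y, symp m c y = 1 := by
  obtain ⟨j, hj⟩ := Function.ne_iff.mp hc
  have hj1 : c j = 1 := zmod2_ne_zero _ (by simpa using hj)
  by_cases h : (j : ℕ) < m
  · refine ⟨Pi.single ⟨m + j.1, by omega⟩ 1, ?_⟩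
    unfold symp
    rw [Finset.sum_eq_single ⟨j.1, h⟩]
    · have e1 : (Pi.single (M := fun _ : Fin (2*m) => ZMod 2) ⟨m + j.1, by omega⟩ 1) ⟨m + j.1, by omega⟩ = 1 := by
        rw [Pi.single_apply, if_pos rfl]
      have e2 : (Pi.single (M := fun _ : Fin (2*m) => ZMod 2) ⟨m + j.1, by omega⟩ 1) ⟨j.1, by omega⟩ = 0 := by
        rw [Pi.single_apply, if_neg]
        intro hh
        have := Fin.mk.inj_iff.mp hh
        omega
      rw [e1, e2, mul_zero, mul_one, add_zero]
      have : (⟨j.1, by omega⟩ : Fin (2*m)) = j := Fin.ext rfl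
      rw [this, hj1]
    · intro i _ hij
      have e1 : (Pi.single (M := fun _ : Fin (2*m) => ZMod 2) ⟨m + j.1, by omega⟩ 1) ⟨m + i.1, by omega⟩ = 0 := by
        rw [Pi.single_apply, if_neg]
        intro hh
        have := Fin.mk.inj_iff.mp hh
        apply hij
        apply Fin.ext
        simp only [Fin.val_mk] at this ⊢
        omega
      have e2 : (Pi.single (M := fun _ : Fin (2*m) => ZMod 2) ⟨m + j.1, by omega⟩ 1) ⟨i.1, by omega⟩ = 0 := by
        rw [Pi.single_apply, if_neg]
        intro hh
        have := Fin.mk.inj_iff.mp hh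
        omega
      rw [e1, e2, mul_zero, mul_zero, add_zero]
    · intro hni; exact absurd (Finset.mem_univ _) hni
  · have hjm : m ≤ (j : ℕ) := le_of_not_gt h
    have hjlt : (j : ℕ) - m < m := by omega
    refine ⟨Pi.single ⟨j.1 - m, by omega⟩ 1, ?_⟩
    unfold symp
    rw [Finset.sum_eq_single ⟨j.1 - m, hjlt⟩]
    · have e1 : (Pi.single (M := fun _ : Fin (2*m) => ZMod 2) ⟨j.1 - m, by omega⟩ 1) ⟨m + (j.1 - m), by omega⟩ = 0 := by
        rw [Pi.single_apply, if_neg]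
        intro hh
        have := Fin.mk.inj_iff.mp hh
        omega
      have e2 : (Pi.single (M := fun _ : Fin (2*m) => ZMod 2) ⟨j.1 - m, by omega⟩ 1) ⟨j.1 - m, by omega⟩ = 1 := by
        rw [Pi.single_apply, if_pos rfl]
      rw [e1, e2, mul_zero, mul_one, zero_add]
      have : (⟨m + (j.1 - m), by omega⟩ : Fin (2*m)) = j := Fin.ext (by simp; omega)
      rw [this, hj1]
    · intro i _ hij
      have e1 : (Pi.single (M := fun _ : Fin (2*m) => ZMod 2) ⟨j.1 - m, by omega⟩ 1) ⟨m + i.1, by omega⟩ = 0 := by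
        rw [Pi.single_apply, if_neg]
        intro hh
        have := Fin.mk.inj_iff.mp hh
        omega
      have e2 : (Pi.single (M := fun _ : Fin (2*m) => ZMod 2) ⟨j.1 - m, by omega⟩ 1) ⟨i.1, by omega⟩ = 0 := by
        rw [Pi.single_apply, if_neg]
        intro hh
        have := Fin.mk.inj_iff.mp hh
        apply hij
        apply Fin.ext
        simp only [Fin.val_mk] at this ⊢
        omega
      rw [e1, e2, mul_zero, mul_zero, add_zero]
    · intro hni; exact absurd (Finset.mem_univ _) hni

lemma card_symp_zero {m : ℕ} (c : Fin (2*m) → ZMod 2) (hc : c ≠ 0) :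
    2 * (univ.filter fun y : Fin (2*m) → ZMod 2 => symp m c y = 0).card = 2^(2*m) := by
  obtain ⟨y0, hy0⟩ := exists_symp_one c hc
  have key := half_card (fun y : Fin (2*m) → ZMod 2 => symp m c y)
    (Equiv.addRight y0) (fun y => by
      simp only [Equiv.coe_addRight]
      rw [symp_add_right, hy0])
  rw [key]
  simp

lemma card_translate {m : ℕ} (c : Fin (2*m) → ZMod 2) :
    (univ.filter fun y : Fin (2*m) → ZMod 2 => th0 m y + symp m c y = 0).card
      = (univ.filter fun y : Fin (2*m) → ZMod 2 => th0 m y = th0 m c).card := by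
  rw [← card_filter_equiv (Equiv.addRight c) (fun y => th0 m y = th0 m c)]
  apply congrArg
  apply Finset.filter_congr
  intro y _
  simp only [Equiv.coe_addRight]
  rw [th0_add, symp_comm y c]
  generalize th0 m y = A
  generalize th0 m c = B
  generalize symp m c y = S
  constructor
  · intro h; revert h; revert A B S; decide
  · intro h; revert h; revert A B S; decide

lemma cardB {m : ℕ} (hm : 1 ≤ m) (c : Fin (2*m) → ZMod 2) (hc : c ≠ 0) :
    ((univ.filter fun y : Fin (2*m) → ZMod 2 =>
        th0 m y = 0 ∧ symp m c y = th0 m c).card = 2^(2*m-2) + 2^(m-1))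
  ∧ ((univ.filter fun y : Fin (2*m) → ZMod 2 =>
        th0 m y = 1 ∧ symp m c y = th0 m c).card + 2^(m-1) = 2^(2*m-2)) := by
  have p1 : (2:ℕ)^(2*m-1) = 2 * 2^(2*m-2) := by
    rw [← pow_succ']
    congr 1
    omega
  have p2 : (2:ℕ)^(2*m) = 2 * 2^(2*m-1) := by
    rw [← pow_succ']
    congr 1
    omega
  have p3 : (2:ℕ)^(m-1) ≤ 2^(2*m-2) := Nat.pow_le_pow_right (by norm_num) (by omega)
  -- h1 : n00 + n01 = Z0
  have h1 := zmod2_split (univ.filter fun y : Fin (2*m) → ZMod 2 => th0 m y = 0)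
    (fun y => symp m c y)
  rw [Finset.filter_filter, Finset.filter_filter, card_th0_zero hm] at h1
  -- htot
  have htot := zmod2_split (univ : Finset (Fin (2*m) → ZMod 2)) (fun y => th0 m y)
  rw [card_th0_zero hm, Finset.card_univ] at htot
  have hcV : Fintype.card (Fin (2*m) → ZMod 2) = 2^(2*m) := by simp
  rw [hcV] at htot
  -- h2 : n10 + n11 = Z1
  have h2 := zmod2_split (univ.filter fun y : Fin (2*m) → ZMod 2 => th0 m y = 1)
    (fun y => symp m c y)
  rw [Finset.filter_filter, Finset.filter_filter] at h2
  -- h3 : n00 + n10 = half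
  have h3 := zmod2_split (univ.filter fun y : Fin (2*m) → ZMod 2 => symp m c y = 0)
    (fun y => th0 m y)
  rw [Finset.filter_filter, Finset.filter_filter] at h3
  have e30 : (univ.filter fun y : Fin (2*m) → ZMod 2 => symp m c y = 0 ∧ th0 m y = 0)
      = univ.filter fun y => th0 m y = 0 ∧ symp m c y = 0 :=
    Finset.filter_congr (fun y _ => and_comm)
  have e31 : (univ.filter fun y : Fin (2*m) → ZMod 2 => symp m c y = 0 ∧ th0 m y = 1)
      = univ.filter fun y => th0 m y = 1 ∧ symp m c y = 0 :=
    Finset.filter_congr (fun y _ => and_comm)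
  rw [e30, e31] at h3
  have h3' := card_symp_zero c hc
  -- h4 : n00 + n11 = Z_{th0 c}
  have h4 := zmod2_split (univ.filter fun y : Fin (2*m) → ZMod 2 => th0 m y + symp m c y = 0)
    (fun y => th0 m y)
  rw [Finset.filter_filter, Finset.filter_filter, card_translate c] at h4
  have e40 : (univ.filter fun y : Fin (2*m) → ZMod 2 => (th0 m y + symp m c y = 0) ∧ th0 m y = 0)
      = univ.filter fun y => th0 m y = 0 ∧ symp m c y = 0 := by
    apply Finset.filter_congr
    intro y _
    generalize th0 m y = A
    generalize symp m c y = S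
    revert A S; decide
  have e41 : (univ.filter fun y : Fin (2*m) → ZMod 2 => (th0 m y + symp m c y = 0) ∧ th0 m y = 1)
      = univ.filter fun y => th0 m y = 1 ∧ symp m c y = 1 := by
    apply Finset.filter_congr
    intro y _
    generalize th0 m y = A
    generalize symp m c y = S
    revert A S; decide
  rw [e40, e41] at h4
  -- case split on th0 c
  have hcases : th0 m c = 0 ∨ th0 m c = 1 := by
    generalize th0 m c = A; revert A; decide
  rcases hcases with ht | ht <;> simp only [ht] at h4 ⊢
  · -- th0 c = 0 : goals about n00, n10
    rw [card_th0_zero hm] at h4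
    omega
  · -- th0 c = 1 : goals about n01, n11
    omega

lemma addV_self {m : ℕ} (x : Fin (2*m) → ZMod 2) : x + x = 0 := by
  funext i; exact CharTwo.add_self_eq_zero _

/-- The two-graph `𝒳^ε_{2m}` on `X = {x : ϑ_d(x) = 1}` with triples
`⟨a,b⟩+⟨a,c⟩+⟨b,c⟩ = 0` is regular of degree `2^{2m-2} - ε 2^{m-1} - 2`. -/
theorem stmt_9 (m : ℕ) (hm : 2 ≤ m) (d : Fin (2*m) → ZMod 2)
    (a b : Fin (2*m) → ZMod 2) (ha : th m d a = 1) (hb : th m d b = 1) (hab : a ≠ b) :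
    let ε : ℤ := if th0 m d = 0 then 1 else -1
    (Nat.card {x : Fin (2*m) → ZMod 2 //
        th m d x = 1 ∧ x ≠ a ∧ x ≠ b ∧ symp m a b + symp m a x + symp m b x = 0} : ℤ)
      = 2^(2*m - 2) - ε * 2^(m - 1) - 2 := by
  show (Nat.card {x : Fin (2*m) → ZMod 2 //
        th m d x = 1 ∧ x ≠ a ∧ x ≠ b ∧ symp m a b + symp m a x + symp m b x = 0} : ℤ)
      = 2^(2*m - 2) - (if th0 m d = 0 then (1:ℤ) else -1) * 2^(m - 1) - 2
  have hm1 : 1 ≤ m := by omega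
  set c := a + b with hcdef
  have hc : c ≠ 0 := by
    intro h
    apply hab
    have e1 : c + b = a := by rw [hcdef, add_assoc, addV_self, add_zero]
    have e2 : c + b = b := by rw [h, zero_add]
    exact e1.symm.trans e2
  have ha2 : th0 m a + symp m a d = 1 := by
    rw [symp_comm a d]; exact ha
  have hb2 : th0 m b + symp m b d = 1 := by
    rw [symp_comm b d]; exact hb
  have h1 : th0 m c = th0 m a + th0 m b + symp m a b := by rw [hcdef]; exact th0_add a b
  have h2 : symp m c d = symp m a d + symp m b d := by rw [hcdef]; exact symp_add_left a b d
  have hkey : symp m a b + symp m c d = th0 m c :=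
    (by decide : ∀ A B C S T U W : ZMod 2,
        C = A + B + S → W = T + U → A + T = 1 → B + U = 1 → S + W = C)
      _ _ _ _ _ _ _ h1 h2 ha2 hb2
  set F := univ.filter (fun x : Fin (2*m) → ZMod 2 =>
    th m d x = 1 ∧ symp m c x = symp m a b) with hF
  have hset : (univ.filter (fun x : Fin (2*m) → ZMod 2 =>
      th m d x = 1 ∧ x ≠ a ∧ x ≠ b ∧ symp m a b + symp m a x + symp m b x = 0))
      = F \ ({a, b} : Finset _) := by
    ext x
    simp only [hF, mem_filter, mem_univ, true_and, mem_sdiff, mem_insert, mem_singleton]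
    have hsx : symp m a x + symp m b x = symp m c x := by
      rw [hcdef, symp_add_left]
    constructor
    · rintro ⟨hx1, hx2, hx3, hx4⟩
      rw [add_assoc, hsx] at hx4
      refine ⟨⟨hx1, ?_⟩, ?_⟩
      · revert hx4
        generalize symp m a b = S
        generalize symp m c x = W
        revert S W; decide
      · rintro (rfl | rfl) <;> [exact hx2 rfl; exact hx3 rfl]
    · rintro ⟨⟨hx1, hx5⟩, hx6⟩
      push_neg at hx6
      refine ⟨hx1, hx6.1, hx6.2, ?_⟩
      rw [add_assoc, hsx, hx5]
      exact CharTwo.add_self_eq_zero _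
  have hsub : ({a, b} : Finset _) ⊆ F := by
    intro x hx
    simp only [mem_insert, mem_singleton] at hx
    simp only [hF, mem_filter, mem_univ, true_and]
    rcases hx with rfl | rfl
    · refine ⟨ha, ?_⟩
      rw [hcdef, symp_add_left, symp_self, symp_comm b, zero_add]
    · refine ⟨hb, ?_⟩
      rw [hcdef, symp_add_left, symp_self, add_zero]
  have hcard2 : ({a, b} : Finset (Fin (2*m) → ZMod 2)).card = 2 := Finset.card_pair hab
  have h2F : 2 ≤ F.card := by
    have := Finset.card_le_card hsub
    omega
  have hFcard_eq : ∀ τ : ZMod 2, (1 : ZMod 2) + th0 m d = τ →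
      F.card = (univ.filter fun y : Fin (2*m) → ZMod 2 =>
        th0 m y = τ ∧ symp m c y = th0 m c).card := by
    intro τ hτ
    rw [hF, ← card_filter_equiv (Equiv.addRight d)
      (fun x => th m d x = 1 ∧ symp m c x = symp m a b)]
    apply congrArg
    apply Finset.filter_congr
    intro y _
    simp only [Equiv.coe_addRight]
    have e1 : th m d (y + d) = th0 m y + th0 m d := by
      unfold th
      rw [th0_add, symp_add_right, symp_self, add_zero, symp_comm y d]
      exact (by decide : ∀ A B S : ZMod 2, A + B + S + S = A + B) _ _ _
    have e2 : symp m c (y + d) = symp m c y + symp m c d := symp_add_right c y d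
    rw [e1, e2]
    exact (by decide : ∀ A B S Cd Sab t0c τ : ZMod 2, Sab + Cd = t0c → 1 + B = τ →
        ((A + B = 1 ∧ S + Cd = Sab) ↔ (A = τ ∧ S = t0c)))
      _ _ _ _ _ _ _ hkey hτ
  rw [Nat.card_eq_fintype_card, Fintype.card_subtype, hset, Finset.card_sdiff_of_subset hsub, hcard2]
  by_cases hd : th0 m d = 0
  · have hτ : (1 : ZMod 2) + th0 m d = 1 := by rw [hd, add_zero]
    have hFc : F.card + 2^(m-1) = 2^(2*m-2) := by
      rw [hFcard_eq 1 hτ]; exact (cardB hm1 c hc).2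
    rw [if_pos hd, Nat.cast_sub h2F]
    have hFc' : (F.card : ℤ) + 2^(m-1) = 2^(2*m-2) := by exact_mod_cast hFc
    push_cast
    linarith
  · have hd1 : th0 m d = 1 := zmod2_ne_zero _ hd
    have hτ : (1 : ZMod 2) + th0 m d = 0 := by rw [hd1]; decide
    have hFc : F.card = 2^(2*m-2) + 2^(m-1) := by
      rw [hFcard_eq 0 hτ]; exact (cardB hm1 c hc).1
    rw [if_neg hd, Nat.cast_sub h2F]
    have hFc' : (F.card : ℤ) = 2^(2*m-2) + 2^(m-1) := by exact_mod_cast hFc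
    push_cast
    linarith
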